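/- Let d ≥ 1 and k > d be integers and let G be a finite simple graph that is d-degenerate. Then the Kempe graph K_k(G) is connected; that is, for any two proper k-colorings α and β of G there is a finite sequence of Kempe changes transforming α into β. -/

import Mathlib

/-- `φ` is a proper `k`-coloring of `G`: adjacent vertices get different colors. -/
def IsProperColoring {V : Type*} (G : SimpleGraph V) (k : ℕ) (φ : V → Fin k) : Prop :=
  ∀ ⦃u v : V⦄, G.Adj u v → φ u ≠ φ v

/-- The spanning subgraph of `G` keeping only edges between vertices colored `a` or `b`:
its connected components meeting the `a/b`-colored vertices are the Kempe chains. -/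
def kempeSub {V : Type*} (G : SimpleGraph V) {k : ℕ} (φ : V → Fin k) (a b : Fin k) :
    SimpleGraph V where
  Adj x y := G.Adj x y ∧ (φ x = a ∨ φ x = b) ∧ (φ y = a ∨ φ y = b)
  symm := ⟨fun x y ⟨h, hx, hy⟩ => ⟨h.symm, hy, hx⟩⟩
  loopless := ⟨fun x h => h.1.ne rfl⟩

/-- `ψ` is obtained from `φ` by a single Kempe change in the pair of colors `{a, b}`:
the colors `a` and `b` are swapped on the Kempe chain containing some vertex `v`
colored `a` or `b`, and all other vertices keep their color. -/
def KempeStepAB {V : Type*} (G : SimpleGraph V) {k : ℕ} (a b : Fin k) (φ ψ : V → Fin k) :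
    Prop :=
  a ≠ b ∧ ∃ v : V, (φ v = a ∨ φ v = b) ∧
    (∀ u : V, (kempeSub G φ a b).Reachable v u → ψ u = Equiv.swap a b (φ u)) ∧
    (∀ u : V, ¬ (kempeSub G φ a b).Reachable v u → ψ u = φ u)

/-- `ψ` is obtained from `φ` by a single Kempe change (in some pair of colors). -/
def KempeStep {V : Type*} (G : SimpleGraph V) (k : ℕ) (φ ψ : V → Fin k) : Prop :=
  ∃ a b : Fin k, KempeStepAB G a b φ ψ

/-- `G` is `d`-degenerate: every (finite, nonempty) subgraph has a vertex of degree
at most `d`, i.e. every finite nonempty vertex subset `S` contains a vertex with at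
most `d` neighbors inside `S`. -/
def Degenerate {V : Type*} (d : ℕ) (G : SimpleGraph V) : Prop :=
  ∀ S : Set V, S.Finite → S.Nonempty → ∃ v ∈ S, {u ∈ S | G.Adj v u}.ncard ≤ d

attribute [local instance] Classical.propDecidable

namespace KempeAux

variable {V : Type*}

lemma kempeSub_adj {G : SimpleGraph V} {k : ℕ} {φ : V → Fin k} {a b : Fin k} {x y : V} :
    (kempeSub G φ a b).Adj x y ↔
      G.Adj x y ∧ (φ x = a ∨ φ x = b) ∧ (φ y = a ∨ φ y = b) := Iff.rfl

lemma walk_closed {H : SimpleGraph V} {R : Set V}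
    (hcl : ∀ ⦃u y : V⦄, u ∈ R → H.Adj u y → y ∈ R) :
    ∀ {x y : V}, H.Walk x y → x ∈ R → y ∈ R := by
  intro x y p
  induction p with
  | nil => exact id
  | cons h _ ih => exact fun hx => ih (hcl hx h)

lemma reach_closed {H : SimpleGraph V} {R : Set V} {x y : V}
    (h : H.Reachable x y)
    (hcl : ∀ ⦃u y : V⦄, u ∈ R → H.Adj u y → y ∈ R) (hx : x ∈ R) : y ∈ R := by
  obtain ⟨p⟩ := h; exact walk_closed hcl p hx

lemma reach_color {G : SimpleGraph V} {k : ℕ} {φ : V → Fin k} {a b : Fin k} {v0 u : V}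
    (hv0 : φ v0 = a ∨ φ v0 = b) (h : (kempeSub G φ a b).Reachable v0 u) :
    φ u = a ∨ φ u = b :=
  reach_closed (R := {u | φ u = a ∨ φ u = b}) h (fun _ _ _ hadj => hadj.2.2) hv0

lemma swap_mem {k : ℕ} {a b c : Fin k} (h : c = a ∨ c = b) :
    Equiv.swap a b c = a ∨ Equiv.swap a b c = b := by
  rcases h with h | h
  · rw [h, Equiv.swap_apply_left]; exact Or.inr rfl
  · rw [h, Equiv.swap_apply_right]; exact Or.inl rfl

lemma swap_ne_self {k : ℕ} {a b c : Fin k} (hab : a ≠ b) (h : c = a ∨ c = b) :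
    Equiv.swap a b c ≠ c := by
  rcases h with h | h
  · rw [h, Equiv.swap_apply_left]; exact hab.symm
  · rw [h, Equiv.swap_apply_right]; exact hab

lemma stepAB_proper {G : SimpleGraph V} {k : ℕ} {a b : Fin k} {φ ψ : V → Fin k}
    (hφ : IsProperColoring G k φ) (h : KempeStepAB G a b φ ψ) :
    IsProperColoring G k ψ := by
  obtain ⟨hab, v0, hv0, hin, hout⟩ := h
  intro u w huw
  by_cases hu : (kempeSub G φ a b).Reachable v0 u <;>
    by_cases hw : (kempeSub G φ a b).Reachable v0 w
  · rw [hin u hu, hin w hw]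
    exact fun e => hφ huw ((Equiv.swap a b).injective e)
  · rw [hin u hu, hout w hw]
    have hcu : φ u = a ∨ φ u = b := reach_color hv0 hu
    have hcw : ¬(φ w = a ∨ φ w = b) := fun hc =>
      hw (hu.trans (SimpleGraph.Adj.reachable (kempeSub_adj.mpr ⟨huw, hcu, hc⟩)))
    push_neg at hcw
    intro e
    rcases swap_mem hcu with h' | h' <;> rw [e] at h'
    · exact hcw.1 h'
    · exact hcw.2 h'
  · rw [hout u hu, hin w hw]
    have hcw : φ w = a ∨ φ w = b := reach_color hv0 hw
    have hcu : ¬(φ u = a ∨ φ u = b) := fun hc =>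
      hu (hw.trans (SimpleGraph.Adj.reachable (kempeSub_adj.mpr ⟨huw.symm, hcw, hc⟩)))
    push_neg at hcu
    intro e
    rcases swap_mem hcw with h' | h' <;> rw [← e] at h'
    · exact hcu.1 h'
    · exact hcu.2 h'
  · rw [hout u hu, hout w hw]; exact hφ huw

/-- The result of swapping `a`,`b` on the Kempe chain of `v0`. -/
noncomputable def kSwap (G : SimpleGraph V) {k : ℕ} (φ : V → Fin k) (a b : Fin k) (v0 : V) :
    V → Fin k := fun u =>
  if (kempeSub G φ a b).Reachable v0 u then Equiv.swap a b (φ u) else φ u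

lemma kSwap_pos {G : SimpleGraph V} {k : ℕ} {a b : Fin k} {φ : V → Fin k} {v0 u : V}
    (h : (kempeSub G φ a b).Reachable v0 u) :
    kSwap G φ a b v0 u = Equiv.swap a b (φ u) := if_pos h

lemma kSwap_neg {G : SimpleGraph V} {k : ℕ} {a b : Fin k} {φ : V → Fin k} {v0 u : V}
    (h : ¬ (kempeSub G φ a b).Reachable v0 u) :
    kSwap G φ a b v0 u = φ u := if_neg h

lemma kSwap_isStep {G : SimpleGraph V} {k : ℕ} {a b : Fin k} {φ : V → Fin k} {v0 : V}
    (hab : a ≠ b) (hv0 : φ v0 = a ∨ φ v0 = b) :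
    KempeStepAB G a b φ (kSwap G φ a b v0) :=
  ⟨hab, v0, hv0, fun _ hu => if_pos hu, fun _ hu => if_neg hu⟩

/-- `G` restricted to the vertex set `S` (as a graph on all of `V`). -/
def GS (G : SimpleGraph V) (S : Set V) : SimpleGraph V where
  Adj x y := G.Adj x y ∧ x ∈ S ∧ y ∈ S
  symm := ⟨fun x y ⟨h, hx, hy⟩ => ⟨h.symm, hy, hx⟩⟩
  loopless := ⟨fun x h => G.loopless.irrefl x h.1⟩

lemma GS_adj {G : SimpleGraph V} {S : Set V} {x y : V} :
    (GS G S).Adj x y ↔ G.Adj x y ∧ x ∈ S ∧ y ∈ S := Iff.rfl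

lemma GS_mono {G : SimpleGraph V} {S T : Set V} (h : S ⊆ T) : GS G S ≤ GS G T :=
  fun _ _ hxy => ⟨hxy.1, h hxy.2.1, h hxy.2.2⟩

lemma kempeSub_mono {G H : SimpleGraph V} {k : ℕ} {φ : V → Fin k} {a b : Fin k}
    (h : G ≤ H) : kempeSub G φ a b ≤ kempeSub H φ a b :=
  fun _ _ hxy => ⟨h hxy.1, hxy.2⟩

lemma kempeSub_congr {H : SimpleGraph V} {k : ℕ} {φ φ' : V → Fin k} {a b : Fin k}
    (h : ∀ ⦃x y : V⦄, H.Adj x y → φ x = φ' x) :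
    kempeSub H φ a b = kempeSub H φ' a b := by
  ext x y
  rw [kempeSub_adj, kempeSub_adj]
  constructor
  · rintro ⟨hxy, h1, h2⟩
    rw [h hxy] at h1; rw [h hxy.symm] at h2
    exact ⟨hxy, h1, h2⟩
  · rintro ⟨hxy, h1, h2⟩
    rw [← h hxy] at h1; rw [← h hxy.symm] at h2
    exact ⟨hxy, h1, h2⟩

/-- A Kempe step for the restriction of `G` to `S`, not changing anything outside `S`. -/
def StepOn (G : SimpleGraph V) (k : ℕ) (S : Set V) (φ ψ : V → Fin k) : Prop :=
  KempeStep (GS G S) k φ ψ ∧ ∀ x ∉ S, ψ x = φ x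

lemma proper_mono {G H : SimpleGraph V} {k : ℕ} {φ : V → Fin k} (h : G ≤ H)
    (hφ : IsProperColoring H k φ) : IsProperColoring G k φ :=
  fun _ _ huv => hφ (h huv)

lemma steps_proper {G : SimpleGraph V} {k : ℕ} {S : Set V} {φ ψ : V → Fin k}
    (h : Relation.ReflTransGen (StepOn G k S) φ ψ)
    (hφ : IsProperColoring (GS G S) k φ) : IsProperColoring (GS G S) k ψ := by
  induction h with
  | refl => exact hφ
  | tail _ hst ih => obtain ⟨a, b, hab⟩ := hst.1; exact stepAB_proper ih hab

end KempeAux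
namespace KempeAux

variable {V : Type*}

/-- Unified one-step lift: if for every `u ≠ v` reachability from `w` in the big Kempe
graph (w.r.t. `γ` on `G|S`) agrees with reachability in the small one (w.r.t. `τ` on
`G|S\{v}`), then swapping the big chain of `w` lifts the planned step. -/
lemma lift_one {G : SimpleGraph V} {k : ℕ} {S : Set V} {v : V} (hv : v ∈ S)
    {a b : Fin k} (hab : a ≠ b) {τ τ' γ : V → Fin k}
    (hagree : ∀ x, x ≠ v → γ x = τ x)
    {w : V} (hwS : w ∈ S \ {v}) (hw : τ w = a ∨ τ w = b)
    (hin : ∀ u, (kempeSub (GS G (S \ {v})) τ a b).Reachable w u →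
      τ' u = Equiv.swap a b (τ u))
    (hout : ∀ u, ¬ (kempeSub (GS G (S \ {v})) τ a b).Reachable w u → τ' u = τ u)
    (hreach : ∀ u, u ≠ v → ((kempeSub (GS G S) γ a b).Reachable w u ↔
      (kempeSub (GS G (S \ {v})) τ a b).Reachable w u)) :
    StepOn G k S γ (kSwap (GS G S) γ a b w) ∧
      ∀ x, x ≠ v → kSwap (GS G S) γ a b w x = τ' x := by
  have hwv : w ≠ v := hwS.2
  have hγw : γ w = a ∨ γ w = b := by rw [hagree w hwv]; exact hw
  have hsmall_sub : ∀ {u}, (kempeSub (GS G (S \ {v})) τ a b).Reachable w u →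
      u ∈ S \ {v} := fun h =>
    reach_closed (R := S \ {v}) h (fun _ _ _ hadj => hadj.1.2.2) hwS
  constructor
  · refine ⟨⟨a, b, kSwap_isStep hab hγw⟩, fun x hx => ?_⟩
    have hxv : x ≠ v := fun e => hx (e ▸ hv)
    have : ¬ (kempeSub (GS G S) γ a b).Reachable w x := fun h =>
      hx (hsmall_sub ((hreach x hxv).mp h)).1
    exact kSwap_neg this
  · intro x hx
    by_cases hr : (kempeSub (GS G S) γ a b).Reachable w x
    · rw [kSwap_pos hr, hin x ((hreach x hx).mp hr), hagree x hx]
    · rw [kSwap_neg hr, hout x (fun h => hr ((hreach x hx).mpr h)), hagree x hx]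

/-- In the saturated case, `v` has at most one neighbour (in `G|S`) coloured `a` or `b`. -/
lemma unique_ab_neighbor [Fintype V] {G : SimpleGraph V} {d k : ℕ} (hk : d < k)
    {S : Set V} {v : V} (hdeg : {u ∈ S | G.Adj v u}.ncard ≤ d)
    {γ : V → Fin k} {a b : Fin k} (hab : a ≠ b)
    (hfull : ∀ c : Fin k, c ≠ a → c ≠ b → ∃ u, (GS G S).Adj v u ∧ γ u = c)
    {y₁ y₂ : V} (h1 : (GS G S).Adj v y₁) (h2 : (GS G S).Adj v y₂)
    (hc1 : γ y₁ = a ∨ γ y₁ = b) (hc2 : γ y₂ = a ∨ γ y₂ = b) : y₁ = y₂ := by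
  by_contra hne
  set N : Set V := {u ∈ S | G.Adj v u} with hN
  have hN1 : y₁ ∈ N := ⟨h1.2.2, h1.1⟩
  have hN2 : y₂ ∈ N := ⟨h2.2.2, h2.1⟩
  set N₀ : Set V := {u ∈ N | γ u ≠ a ∧ γ u ≠ b} with hN₀
  have hF : ({a, b}ᶜ : Set (Fin k)) ⊆ γ '' N₀ := by
    intro c hc
    simp only [Set.mem_compl_iff, Set.mem_insert_iff, Set.mem_singleton_iff, not_or] at hc
    obtain ⟨u, hu, hcu⟩ := hfull c hc.1 hc.2
    exact ⟨u, ⟨⟨hu.2.2, hu.1⟩, by rw [hcu]; exact hc.1, by rw [hcu]; exact hc.2⟩, hcu⟩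
  have hk2 : 2 ≤ k := by
    have ha := a.isLt; have hb := b.isLt
    have : (a : ℕ) ≠ (b : ℕ) := Fin.val_ne_of_ne hab
    omega
  have hcardpair : ({a, b} : Set (Fin k)).ncard = 2 := Set.ncard_pair hab
  have hcompl : ({a, b} : Set (Fin k)).ncard + ({a, b}ᶜ : Set (Fin k)).ncard = k := by
    rw [Set.ncard_add_ncard_compl, Nat.card_eq_fintype_card, Fintype.card_fin]
  have hFcard : k - 2 ≤ N₀.ncard := by
    have h1' : ({a, b}ᶜ : Set (Fin k)).ncard ≤ (γ '' N₀).ncard :=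
      Set.ncard_le_ncard hF (Set.toFinite _)
    have h2' : (γ '' N₀).ncard ≤ N₀.ncard := Set.ncard_image_le (Set.toFinite _)
    omega
  have hdisj : Disjoint N₀ ({y₁, y₂} : Set V) := by
    rw [Set.disjoint_left]
    rintro x hx (h | h) <;> subst h
    · rcases hc1 with h | h
      · exact hx.2.1 h
      · exact hx.2.2 h
    · rcases hc2 with h | h
      · exact hx.2.1 h
      · exact hx.2.2 h
  have hsub : N₀ ∪ {y₁, y₂} ⊆ N := by
    rintro x (hx | hx)
    · exact hx.1
    · rcases hx with h | h <;> subst h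
      · exact hN1
      · exact hN2
  have hu : (N₀ ∪ {y₁, y₂} : Set V).ncard = N₀.ncard + 2 := by
    rw [Set.ncard_union_eq hdisj (Set.toFinite _) (Set.toFinite _), Set.ncard_pair hne]
  have hle : (N₀ ∪ {y₁, y₂} : Set V).ncard ≤ N.ncard :=
    Set.ncard_le_ncard hsub (Set.toFinite _)
  omega

end KempeAux
namespace KempeAux

variable {V : Type*}

lemma lift_step [Fintype V] {G : SimpleGraph V} {d k : ℕ} (hk : d < k)
    {S : Set V} {v : V} (hv : v ∈ S) (hdeg : {u ∈ S | G.Adj v u}.ncard ≤ d)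
    {τ τ' γ : V → Fin k}
    (hγp : IsProperColoring (GS G S) k γ)
    (hagree : ∀ x, x ≠ v → γ x = τ x)
    (hstep : StepOn G k (S \ {v}) τ τ') :
    ∃ γ', Relation.ReflTransGen (StepOn G k S) γ γ' ∧ ∀ x, x ≠ v → γ' x = τ' x := by
  obtain ⟨⟨a, b, hab, w, hw, hin, hout⟩, hoff⟩ := hstep
  -- the chosen vertex of the planned step lies in `S \ {v}`
  have hwS : w ∈ S \ {v} := by
    by_contra hwn
    have h1 := hoff w hwn
    have h2 := hin w (SimpleGraph.Reachable.refl _)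
    rw [h1] at h2
    exact swap_ne_self hab hw h2.symm
  have hwv : w ≠ v := hwS.2
  have hsmall_sub : ∀ {u}, (kempeSub (GS G (S \ {v})) τ a b).Reachable w u →
      u ∈ S \ {v} := fun h =>
    reach_closed (R := S \ {v}) h (fun _ _ _ hadj => hadj.1.2.2) hwS
  have hτcol : ∀ {u}, (kempeSub (GS G (S \ {v})) τ a b).Reachable w u →
      τ u = a ∨ τ u = b := fun h => reach_color hw h
  -- the small Kempe graph is the same for any coloring agreeing with τ off v
  have hcongr : ∀ (g1 : V → Fin k), (∀ x, x ≠ v → g1 x = τ x) →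
      kempeSub (GS G (S \ {v})) g1 a b = kempeSub (GS G (S \ {v})) τ a b := by
    intro g1 hag
    exact kempeSub_congr (fun x y hxy => hag x hxy.2.1.2)
  -- "easy" reach equivalence whenever v does not link into the chain of w
  have heasy : ∀ (g1 : V → Fin k), (∀ x, x ≠ v → g1 x = τ x) →
      ¬((g1 v = a ∨ g1 v = b) ∧
        ∃ u, (GS G S).Adj v u ∧ (kempeSub (GS G (S \ {v})) τ a b).Reachable w u) →
      ∀ u, u ≠ v → ((kempeSub (GS G S) g1 a b).Reachable w u ↔
        (kempeSub (GS G (S \ {v})) τ a b).Reachable w u) := by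
    intro g1 hag hsep u _
    constructor
    · intro h
      refine reach_closed
        (R := {u | (kempeSub (GS G (S \ {v})) τ a b).Reachable w u}) h ?_
        (SimpleGraph.Reachable.refl _)
      intro p y hp hadj
      have hpS : p ∈ S \ {v} := hsmall_sub hp
      by_cases hyv : y = v
      · subst hyv
        exact absurd ⟨hadj.2.2, p, hadj.1.symm, hp⟩ hsep
      · have hyS : y ∈ S \ {v} := ⟨hadj.1.2.2, hyv⟩
        have hadj' : (kempeSub (GS G (S \ {v})) τ a b).Adj p y := by
          refine ⟨⟨hadj.1.1, hpS, hyS⟩, ?_, ?_⟩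
          · rw [← hag p hpS.2]; exact hadj.2.1
          · rw [← hag y hyv]; exact hadj.2.2
        exact hp.trans hadj'.reachable
    · intro h
      have h' : (kempeSub (GS G (S \ {v})) g1 a b).Reachable w u := by
        rw [hcongr g1 hag]; exact h
      exact h'.mono (kempeSub_mono (GS_mono Set.diff_subset))
  by_cases hbad : (γ v = a ∨ γ v = b) ∧
      ∃ u, (GS G S).Adj v u ∧ (kempeSub (GS G (S \ {v})) τ a b).Reachable w u
  · obtain ⟨hγv, u₀, hadj₀, hu₀⟩ := hbad
    by_cases hc : ∃ c : Fin k, c ≠ a ∧ c ≠ b ∧ ∀ u, (GS G S).Adj v u → γ u ≠ c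
    · -- recolor v to c first, then do the easy lift
      obtain ⟨c, hca, hcb, hcn⟩ := hc
      have hvc : γ v ≠ c := by
        rcases hγv with h | h <;> rw [h]
        · exact hca.symm
        · exact hcb.symm
      have hstep1 : KempeStepAB (GS G S) (γ v) c γ (kSwap (GS G S) γ (γ v) c v) :=
        kSwap_isStep hvc (Or.inl rfl)
      set γ₁ := kSwap (GS G S) γ (γ v) c v with hγ₁
      have hsing : ∀ {u}, (kempeSub (GS G S) γ (γ v) c).Reachable v u → u = v := by
        intro u h
        refine reach_closed (R := {v}) h ?_ rfl
        intro p y hp hadj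
        have hpv : p = v := hp
        rw [hpv] at hadj
        rcases hadj.2.2 with h' | h'
        · exact absurd h'.symm (hγp hadj.1)
        · exact absurd h' (hcn y hadj.1)
      have hγ₁v : γ₁ v = c := by
        rw [hγ₁, kSwap_pos (SimpleGraph.Reachable.refl _), Equiv.swap_apply_left]
      have hγ₁x : ∀ x, x ≠ v → γ₁ x = γ x := fun x hx =>
        kSwap_neg (fun h => hx (hsing h))
      have hag1 : ∀ x, x ≠ v → γ₁ x = τ x := fun x hx => by
        rw [hγ₁x x hx]; exact hagree x hx
      have step1 : StepOn G k S γ γ₁ :=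
        ⟨⟨_, _, hstep1⟩, fun x hx => hγ₁x x (fun e => hx (e ▸ hv))⟩
      have hsep1 : ¬((γ₁ v = a ∨ γ₁ v = b) ∧
          ∃ u, (GS G S).Adj v u ∧ (kempeSub (GS G (S \ {v})) τ a b).Reachable w u) := by
        rintro ⟨h', -⟩
        rw [hγ₁v] at h'
        rcases h' with h' | h'
        · exact hca h'
        · exact hcb h'
      obtain ⟨h2, h3⟩ := lift_one hv hab hag1 hwS hw hin hout (heasy γ₁ hag1 hsep1)
      exact ⟨_, (Relation.ReflTransGen.single step1).tail h2, h3⟩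
    · -- saturated case: the big chain is the small chain plus v
      push_neg at hc
      have hfull : ∀ c : Fin k, c ≠ a → c ≠ b → ∃ u, (GS G S).Adj v u ∧ γ u = c :=
        fun c hca hcb => hc c hca hcb
      have hu₀S : u₀ ∈ S \ {v} := hsmall_sub hu₀
      have hγu₀ : γ u₀ = a ∨ γ u₀ = b := by
        rw [hagree u₀ hu₀S.2]; exact hτcol hu₀
      have hreach : ∀ u, u ≠ v → ((kempeSub (GS G S) γ a b).Reachable w u ↔
          (kempeSub (GS G (S \ {v})) τ a b).Reachable w u) := by
        intro u hu
        constructor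
        · intro h
          have hcl : ∀ ⦃p y : V⦄,
              p ∈ {u | u = v ∨ (kempeSub (GS G (S \ {v})) τ a b).Reachable w u} →
              (kempeSub (GS G S) γ a b).Adj p y →
              y ∈ {u | u = v ∨ (kempeSub (GS G (S \ {v})) τ a b).Reachable w u} := by
            rintro p y (hp | hp) hadj
            · subst hp
              have hy : y = u₀ :=
                unique_ab_neighbor hk hdeg hab hfull hadj.1 hadj₀ hadj.2.2 hγu₀
              exact Or.inr (hy ▸ hu₀)
            · have hpS : p ∈ S \ {v} := hsmall_sub hp
              by_cases hyv : y = v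
              · exact Or.inl hyv
              · have hyS : y ∈ S \ {v} := ⟨hadj.1.2.2, hyv⟩
                have hadj' : (kempeSub (GS G (S \ {v})) τ a b).Adj p y := by
                  refine ⟨⟨hadj.1.1, hpS, hyS⟩, ?_, ?_⟩
                  · rw [← hagree p hpS.2]; exact hadj.2.1
                  · rw [← hagree y hyv]; exact hadj.2.2
                exact Or.inr (hp.trans hadj'.reachable)
          have := reach_closed h hcl (Or.inr (SimpleGraph.Reachable.refl _))
          rcases this with h' | h'
          · exact absurd h' hu
          · exact h'
        · intro h
          have h' : (kempeSub (GS G (S \ {v})) γ a b).Reachable w u := by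
            rw [hcongr γ hagree]; exact h
          exact h'.mono (kempeSub_mono (GS_mono Set.diff_subset))
      obtain ⟨h2, h3⟩ := lift_one hv hab hagree hwS hw hin hout hreach
      exact ⟨_, Relation.ReflTransGen.single h2, h3⟩
  · obtain ⟨h2, h3⟩ := lift_one hv hab hagree hwS hw hin hout (heasy γ hagree hbad)
    exact ⟨_, Relation.ReflTransGen.single h2, h3⟩

end KempeAux
namespace KempeAux

variable {V : Type*}

lemma lift_all [Fintype V] {G : SimpleGraph V} {d k : ℕ} (hk : d < k)
    {S : Set V} {v : V} (hv : v ∈ S) (hdeg : {u ∈ S | G.Adj v u}.ncard ≤ d)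
    {τ τ' : V → Fin k}
    (h : Relation.ReflTransGen (StepOn G k (S \ {v})) τ τ') :
    ∀ γ, IsProperColoring (GS G S) k γ → (∀ x, x ≠ v → γ x = τ x) →
    ∃ γ', Relation.ReflTransGen (StepOn G k S) γ γ' ∧ (∀ x, x ≠ v → γ' x = τ' x) := by
  induction h using Relation.ReflTransGen.head_induction_on with
  | refl => exact fun γ _ hag => ⟨γ, Relation.ReflTransGen.refl, hag⟩
  | head hst _ ih =>
    intro γ hp hag
    obtain ⟨γ₁, hchain1, hag1⟩ := lift_step hk hv hdeg hp hag hst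
    have hp1 := steps_proper hchain1 hp
    obtain ⟨γ₂, hchain2, hag2⟩ := ih γ₁ hp1 hag1
    exact ⟨γ₂, hchain1.trans hchain2, hag2⟩

lemma main_aux [Fintype V] {d k : ℕ} (hk : d < k) (G : SimpleGraph V)
    (hG : Degenerate d G) :
    ∀ (n : ℕ) (S : Set V), S.ncard = n →
    ∀ α β : V → Fin k, IsProperColoring (GS G S) k α → IsProperColoring (GS G S) k β →
    (∀ x ∉ S, α x = β x) → Relation.ReflTransGen (StepOn G k S) α β := by
  intro n
  induction n with
  | zero =>
    intro S hS α β _ _ hout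
    have hSe : S = ∅ := (Set.ncard_eq_zero (Set.toFinite S)).mp hS
    have : α = β := funext fun x => hout x (by rw [hSe]; exact Set.notMem_empty x)
    rw [this]
  | succ n ih =>
    intro S hS α β hαp hβp hout
    have hSne : S.Nonempty := Set.nonempty_of_ncard_ne_zero (by omega)
    obtain ⟨v, hv, hdeg⟩ := hG S (Set.toFinite S) hSne
    have hS' : (S \ {v}).ncard = n := by
      rw [Set.ncard_diff_singleton_of_mem hv, hS]
      omega
    set β₁ := Function.update β v (α v) with hβ₁
    have hβ₁x : ∀ x, x ≠ v → β₁ x = β x := fun x hx => Function.update_of_ne hx _ _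
    have hαp' : IsProperColoring (GS G (S \ {v})) k α :=
      proper_mono (GS_mono Set.diff_subset) hαp
    have hβ₁p' : IsProperColoring (GS G (S \ {v})) k β₁ := by
      intro x y hxy
      rw [hβ₁x x hxy.2.1.2, hβ₁x y hxy.2.2.2]
      exact hβp (GS_mono Set.diff_subset hxy)
    have hout' : ∀ x ∉ S \ {v}, α x = β₁ x := by
      intro x hx
      by_cases hxv : x = v
      · subst hxv; rw [hβ₁, Function.update_self]
      · have hxS : x ∉ S := by
          intro hxS; exact hx ⟨hxS, hxv⟩
        rw [hβ₁x x hxv]; exact hout x hxS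
    have hplan := ih (S \ {v}) hS' α β₁ hαp' hβ₁p' hout'
    obtain ⟨γ', hchain, hag⟩ := lift_all hk hv hdeg hplan α hαp (fun _ _ => rfl)
    have hagβ : ∀ x, x ≠ v → γ' x = β x := fun x hx => by
      rw [hag x hx]; exact hβ₁x x hx
    have hγ'p : IsProperColoring (GS G S) k γ' := steps_proper hchain hαp
    by_cases hfin : γ' v = β v
    · have : γ' = β := funext fun x => by
        by_cases hx : x = v
        · rw [hx]; exact hfin
        · exact hagβ x hx
      rw [← this]; exact hchain
    · have hsing : ∀ {u}, (kempeSub (GS G S) γ' (γ' v) (β v)).Reachable v u → u = v := by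
        intro u h
        refine reach_closed (R := {v}) h ?_ rfl
        intro p y hp hadj
        have hpv : p = v := hp
        rw [hpv] at hadj
        have hyv : y ≠ v := fun e => (GS G S).loopless.irrefl v (e ▸ hadj.1)
        rcases hadj.2.2 with h' | h'
        · exact absurd h'.symm (hγ'p hadj.1)
        · rw [hagβ y hyv] at h'
          exact absurd h'.symm (hβp hadj.1)
      have hstep : KempeStepAB (GS G S) (γ' v) (β v) γ'
          (kSwap (GS G S) γ' (γ' v) (β v) v) := kSwap_isStep hfin (Or.inl rfl)
      have heq : kSwap (GS G S) γ' (γ' v) (β v) v = β := by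
        funext x
        by_cases hx : x = v
        · subst hx
          rw [kSwap_pos (SimpleGraph.Reachable.refl _), Equiv.swap_apply_left]
        · rw [kSwap_neg (fun h => hx (hsing h))]
          exact hagβ x hx
      have hstepOn : StepOn G k S γ' β := by
        rw [← heq]
        refine ⟨⟨_, _, hstep⟩, fun x hx => ?_⟩
        have hxv : x ≠ v := fun e => hx (e ▸ hv)
        exact kSwap_neg (fun h => hxv (hsing h))
      exact hchain.tail hstepOn

lemma toSeq {X : Type*} {r : X → X → Prop} {α β : X}
    (h : Relation.ReflTransGen r α β) :
    ∃ (m : ℕ) (σ : ℕ → X), σ 0 = α ∧ σ m = β ∧ ∀ i < m, r (σ i) (σ (i + 1)) := by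
  induction h with
  | refl => exact ⟨0, fun _ => α, rfl, rfl, fun i hi => absurd hi (Nat.not_lt_zero i)⟩
  | @tail b c _ hbc ih =>
    obtain ⟨m, σ, h0, hm, hs⟩ := ih
    refine ⟨m + 1, fun i => if i ≤ m then σ i else c, ?_, ?_, ?_⟩
    · show (if 0 ≤ m then σ 0 else c) = _
      rw [if_pos (Nat.zero_le m)]; exact h0
    · show (if m + 1 ≤ m then σ (m + 1) else c) = c
      rw [if_neg (by omega)]
    · intro i hi
      show r (if i ≤ m then σ i else c) (if i + 1 ≤ m then σ (i + 1) else c)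
      by_cases him : i < m
      · rw [if_pos (by omega), if_pos (by omega)]
        exact hs i him
      · have him' : i = m := by omega
        rw [him', if_pos (le_refl m), if_neg (by omega), hm]
        exact hbc

end KempeAux
open KempeAux in
theorem kempe_connected_of_degenerate {V : Type*} [Fintype V] (d k : ℕ)
    (hd : 1 ≤ d) (hk : d < k) (G : SimpleGraph V) (hG : Degenerate d G)
    (α β : V → Fin k) (hα : IsProperColoring G k α) (hβ : IsProperColoring G k β) :
    ∃ (m : ℕ) (σ : ℕ → V → Fin k), σ 0 = α ∧ σ m = β ∧
      (∀ i ≤ m, IsProperColoring G k (σ i)) ∧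
      (∀ i < m, KempeStep G k (σ i) (σ (i + 1))) := by
  have hGU : GS G Set.univ = G := by
    ext x y
    rw [GS_adj]
    simp
  have hchain : Relation.ReflTransGen (StepOn G k Set.univ) α β := by
    refine main_aux hk G hG (Set.univ : Set V).ncard Set.univ rfl α β ?_ ?_
      (fun x hx => absurd (Set.mem_univ x) hx)
    · rw [hGU]; exact hα
    · rw [hGU]; exact hβ
  have hchain' : Relation.ReflTransGen (fun φ ψ => KempeStep G k φ ψ) α β :=
    Relation.ReflTransGen.mono (r := StepOn G k Set.univ) (fun φ ψ h => hGU ▸ h.1) _ _ hchain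
  obtain ⟨m, σ, h0, hm, hs⟩ := toSeq hchain'
  refine ⟨m, σ, h0, hm, ?_, hs⟩
  intro i
  induction i with
  | zero => intro _; rw [h0]; exact hα
  | succ j ih =>
    intro hj
    obtain ⟨a, b, hab⟩ := hs j (by omega)
    exact stepAB_proper (ih (by omega)) hab
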